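/- Let γ = ((a,b),(c,d)) ∈ SL₂(ℝ) and let v(w) = −arctan(Re w / Im w) for w ∈ ℍ. Then for y > 0 and θ ∈ (−π/2, π/2), tan(v(γ · (e^{iθ} i y))) = (ad+bc)·tan θ − (acy + bd/y)/cos θ, where γ acts by Möbius transformation. -/

import Mathlib

open Real Complex

/-- For γ = ((a,b),(c,d)) ∈ SL₂(ℝ), y > 0 and θ ∈ (−π/2, π/2), with
w = e^{iθ}·iy and v(·) = −arctan(Re/Im), one has
tan(v(γw)) = (ad+bc)·tan θ − (acy + bd/y)/cos θ. -/
theorem stmt_8 (a b c d : ℝ) (hdet : a * d - b * c = 1)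
    (y θ : ℝ) (hy : 0 < y) (hθ₁ : -(π / 2) < θ) (hθ₂ : θ < π / 2) :
    let w : ℂ := Complex.exp (θ * Complex.I) * (Complex.I * (y : ℂ))
    let gw : ℂ := ((a : ℂ) * w + b) / ((c : ℂ) * w + d)
    Real.tan (-Real.arctan (gw.re / gw.im))
      = (a * d + b * c) * Real.tan θ - (a * c * y + b * d / y) / Real.cos θ := by
  intro w gw
  have hcos : 0 < Real.cos θ := Real.cos_pos_of_mem_Ioo ⟨hθ₁, hθ₂⟩
  have hwre : w.re = -(y * Real.sin θ) := by
    simp [w, Complex.exp_mul_I, Complex.mul_re, Complex.mul_im,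
      Complex.sin_ofReal_re, Complex.cos_ofReal_re]
    ring
  have hwim : w.im = y * Real.cos θ := by
    simp [w, Complex.exp_mul_I, Complex.mul_re, Complex.mul_im,
      Complex.sin_ofReal_re, Complex.cos_ofReal_re]
    ring
  have hz : ((c : ℂ) * w + d) ≠ 0 := by
    intro h
    rcases Complex.ext_iff.mp h with ⟨h1, h2⟩
    simp [Complex.mul_im, Complex.mul_re, hwim, hwre] at h1 h2
    have hc : c = 0 := by
      rcases h2 with hc | hy0 | hcos0
      · exact hc
      · exact absurd hy0 (ne_of_gt hy)
      · exact absurd hcos0 (ne_of_gt hcos)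
    rw [hc] at h1
    simp at h1
    rw [hc, h1] at hdet
    simp at hdet
  rw [Real.tan_neg, Real.tan_arctan]
  have hn : Complex.normSq ((c : ℂ) * w + d) ≠ 0 := by
    simpa [Complex.normSq_eq_zero] using hz
  have hre : gw.re = (a*c*(w.re^2+w.im^2) + b*d + (a*d+b*c)*w.re) / Complex.normSq ((c:ℂ)*w+d) := by
    rw [show gw = ((a : ℂ) * w + b) / ((c : ℂ) * w + d) from rfl, Complex.div_re]
    simp [Complex.normSq_apply, Complex.mul_re, Complex.mul_im]
    ring
  have key : ((a:ℂ)*w+b).im * ((c:ℂ)*w+d).re - ((a:ℂ)*w+b).re * ((c:ℂ)*w+d).im = w.im := by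
    simp [Complex.mul_re, Complex.mul_im]
    linear_combination w.im * hdet
  have him : gw.im = w.im / Complex.normSq ((c:ℂ)*w+d) := by
    rw [show gw = ((a : ℂ) * w + b) / ((c : ℂ) * w + d) from rfl, Complex.div_im,
      div_sub_div_same, key]
  rw [hre, him, hwre, hwim, Real.tan_eq_sin_div_cos]
  have hs := Real.sin_sq_add_cos_sq θ
  field_simp
  linear_combination (-(a*c*y^2)) * hs
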